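/- arXiv:2107.08428 — 2 statements merged into one kernel-verified Lean document; each statement's English description precedes it below -/
import Mathlib

section
/- Let V be a locally finite game graph and let x be a position of R(V). If x has finite rank in V, then x has finite rank in R(V), and 𝒢_{R(V)}(x) = 𝒢_V(x) − 1. -/
open scoped Classical

universe u

/-- `PosP Γ n` is the set `Pₙ` of positions from which the second player can win
within `n` rounds: `P₀` is the set of terminal positions, and
`Pₙ₊₁ = {x : every option of x has an option in Pₙ}`. -/
def PosP {V : Type*} (Γ : V → Finset V) : ℕ → Set V
  | 0 => {x | Γ x = ∅}
  | n + 1 => {x | ∀ y ∈ Γ x, ∃ z ∈ Γ y, z ∈ PosP Γ n}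

/-- `PosN Γ n` is the set `Nₙ`: for `n ≥ 1`, `Nₙ = {x : some option of x lies in Pₙ₋₁}`. -/
def PosN {V : Type*} (Γ : V → Finset V) : ℕ → Set V
  | 0 => ∅
  | n + 1 => {x | ∃ y ∈ Γ x, y ∈ PosP Γ n}

/-- The P-positions `𝒫 = ⋃ₙ Pₙ` (second player wins). -/
def PPos {V : Type*} (Γ : V → Finset V) : Set V := ⋃ n, PosP Γ n

/-- The N-positions `𝒩 = ⋃ₙ Nₙ` (first player wins). -/
def NPos {V : Type*} (Γ : V → Finset V) : Set V := ⋃ n, PosN Γ n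

/-- The D-positions `𝒟 = V ∖ (𝒫 ∪ 𝒩)` (draws). -/
def DPos {V : Type*} (Γ : V → Finset V) : Set V := (PPos Γ ∪ NPos Γ)ᶜ

/-- The mex (least natural number not attained) of the values `g y`, `y ∈ s`. -/
noncomputable def mexF {V : Type*} (s : Finset V) (g : V → ℕ∞) : ℕ :=
  sInf {n : ℕ | ∀ y ∈ s, g y ≠ (n : ℕ∞)}

/-- The approximants `𝒢ₙ` of the extended Sprague-Grundy function. -/
noncomputable def Gfun {V : Type*} (Γ : V → Finset V) : ℕ → V → ℕ∞
  | 0 => fun x => if Γ x = ∅ then 0 else ⊤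
  | n + 1 => fun x =>
      let m := mexF (Γ x) (Gfun Γ n)
      if ∀ y ∈ Γ x, Gfun Γ n y ≤ (m : ℕ∞) ∨ ∃ z ∈ Γ y, Gfun Γ n z = (m : ℕ∞)
      then (m : ℕ∞) else ⊤

/-- `x` has finite rank with (finite) Sprague-Grundy value `m`:
`𝒢ₙ(x) = m` for all sufficiently large `n`. -/
def HasGVal {V : Type*} (Γ : V → Finset V) (x : V) (m : ℕ) : Prop :=
  ∃ n₀ : ℕ, ∀ n ≥ n₀, Gfun Γ n x = (m : ℕ∞)

/-- `x` has infinite rank: `𝒢ₙ(x) = ∞` for all `n`. -/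
def InfiniteRank {V : Type*} (Γ : V → Finset V) (x : V) : Prop :=
  ∀ n : ℕ, Gfun Γ n x = ⊤

/-- The rank of `x`: the least `n` with `𝒢ₙ(x) < ∞`, or `∞` if there is none. -/
noncomputable def rank {V : Type*} (Γ : V → Finset V) (x : V) : ℕ∞ :=
  sInf ((↑) '' {n : ℕ | Gfun Γ n x ≠ ⊤})

/-- For `x` of infinite rank, the set `𝒜` with `𝒢(x) = ∞(𝒜)`:
the set of finite Sprague-Grundy values of finite-rank options of `x`. -/
def ValSet {V : Type*} (Γ : V → Finset V) (x : V) : Set ℕ :=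
  {a | ∃ y ∈ Γ x, HasGVal Γ y a}

/-- The graph of the disjunctive sum: move in exactly one coordinate. -/
noncomputable def sumGraph {V W : Type*} (Γ : V → Finset V) (Δ : W → Finset W) :
    V × W → Finset (V × W) := fun p =>
  (Γ p.1).image (fun u => (u, p.2)) ∪ (Δ p.2).image (fun w => (p.1, w))

/-- Two (positions of possibly different) games lie in the same outcome class. -/
def SameOutcome {V W : Type*} (Γ : V → Finset V) (x : V) (Δ : W → Finset W) (y : W) : Prop :=
  (x ∈ PPos Γ ↔ y ∈ PPos Δ) ∧ (x ∈ NPos Γ ↔ y ∈ NPos Δ) ∧ (x ∈ DPos Γ ↔ y ∈ DPos Δ)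

/-- Equivalence of games: `G + X` and `H + X` have the same outcome for every
locally finite game `X`. -/
def GameEquiv {V W : Type*} (Γ : V → Finset V) (x : V) (Δ : W → Finset W) (y : W) : Prop :=
  ∀ (X : Type u) (Ξ : X → Finset X) (z : X),
    SameOutcome (sumGraph Γ Ξ) (x, z) (sumGraph Δ Ξ) (y, z)

/-- The nim heap `*m`: positions `0, …, m`, where from `k` one can move to any `j < k`. -/
def nimGraph (m : ℕ) : Fin (m + 1) → Finset (Fin (m + 1)) :=
  fun k => Finset.univ.filter (fun j => j < k)

/-- The reduced graph `R(V)`: the induced graph on the complement of the P-positions. -/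
noncomputable def reducedGraph {V : Type*} (Γ : V → Finset V) :
    {x : V // x ∉ PPos Γ} → Finset {x : V // x ∉ PPos Γ} := fun x =>
  (Γ x.1).subtype (fun y => y ∉ PPos Γ)

/-- The vertex set of `R^{(k)}(V)`: positions which do not have finite rank with
Sprague-Grundy value `< k`. -/
def RkSet {V : Type*} (Γ : V → Finset V) (k : ℕ) : Set V :=
  {x | ¬ ∃ m < k, HasGVal Γ x m}

/-- The induced game graph `R^{(k)}(V)` on `RkSet Γ k`. -/
noncomputable def RkGraph {V : Type*} (Γ : V → Finset V) (k : ℕ) :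
    RkSet Γ k → Finset (RkSet Γ k) := fun x =>
  (Γ x.1).subtype (fun y => y ∈ RkSet Γ k)

/-- `V` is `k`-stable: every infinite-rank position `x`, with `𝒢(x) = ∞(𝒜)`,
has `{0, 1, …, k} ⊆ 𝒜`. -/
def kStable {V : Type*} (Γ : V → Finset V) (k : ℕ) : Prop :=
  ∀ x, InfiniteRank Γ x → ∀ j ≤ k, j ∈ ValSet Γ x

/-- `l` is a directed walk from `o` to `x` in the graph `Γ`. -/
def IsWalk {V : Type*} (Γ : V → Finset V) (o x : V) (l : List V) : Prop :=
  l.head? = some o ∧ l.getLast? = some x ∧ l.Chain' (fun a b => b ∈ Γ a)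

/-- `Γ` is a tree with root `o`: `o` has no incoming arcs, and every vertex is
reached from `o` by a unique directed walk. -/
def IsTree {V : Type*} (Γ : V → Finset V) (o : V) : Prop :=
  (∀ x, o ∉ Γ x) ∧ ∀ x, ∃! l : List V, IsWalk Γ o x l

/-- `f` is a mex labelling: `f x` is the least natural number not attained by `f`
on the options of `x`, for every `x`. -/
def MexLabelling {V : Type*} (Γ : V → Finset V) (f : V → ℕ) : Prop :=
  ∀ x, f x = sInf {n : ℕ | ∀ y ∈ Γ x, f y ≠ n}

section Aux

variable {V : Type*}

lemma exists_not_attained (s : Finset V) (g : V → ℕ∞) :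
    ∃ n : ℕ, ∀ y ∈ s, g y ≠ (n : ℕ∞) := by
  obtain ⟨n, hn⟩ := Infinite.exists_notMem_finset ((s.image g).preimage
    (fun n : ℕ => (n : ℕ∞)) (Set.injOn_of_injective Nat.cast_injective))
  refine ⟨n, fun y hy hgy => hn ?_⟩
  simp only [Finset.mem_preimage, Finset.mem_image]
  exact ⟨y, hy, hgy⟩

lemma mexF_not_attained (s : Finset V) (g : V → ℕ∞) :
    ∀ y ∈ s, g y ≠ (mexF s g : ℕ∞) :=
  Nat.sInf_mem (s := {n : ℕ | ∀ y ∈ s, g y ≠ (n : ℕ∞)}) (exists_not_attained s g)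

lemma mexF_attained {s : Finset V} {g : V → ℕ∞} {j : ℕ} (h : j < mexF s g) :
    ∃ y ∈ s, g y = (j : ℕ∞) := by
  have := Nat.notMem_of_lt_sInf h
  simp only [Set.mem_setOf_eq, not_forall] at this
  obtain ⟨y, hy, hgy⟩ := this
  exact ⟨y, hy, not_not.mp hgy⟩

lemma mexF_eq {s : Finset V} {g : V → ℕ∞} {k : ℕ}
    (h1 : ∀ y ∈ s, g y ≠ (k : ℕ∞)) (h2 : ∀ j < k, ∃ y ∈ s, g y = (j : ℕ∞)) :
    mexF s g = k := by
  refine le_antisymm (Nat.sInf_le h1) ?_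
  by_contra hlt
  push_neg at hlt
  obtain ⟨y, hy, hgy⟩ := h2 _ hlt
  exact mexF_not_attained s g y hy hgy

variable (Γ : V → Finset V)

lemma gfun_succ (n : ℕ) (x : V) :
    Gfun Γ (n + 1) x =
      if ∀ y ∈ Γ x, Gfun Γ n y ≤ (mexF (Γ x) (Gfun Γ n) : ℕ∞) ∨
          ∃ z ∈ Γ y, Gfun Γ n z = (mexF (Γ x) (Gfun Γ n) : ℕ∞)
      then (mexF (Γ x) (Gfun Γ n) : ℕ∞) else ⊤ := rfl

lemma gfun_succ_elim {n : ℕ} {x : V} {m : ℕ} (h : Gfun Γ (n + 1) x = (m : ℕ∞)) :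
    mexF (Γ x) (Gfun Γ n) = m ∧
      ∀ y ∈ Γ x, Gfun Γ n y ≤ (m : ℕ∞) ∨ ∃ z ∈ Γ y, Gfun Γ n z = (m : ℕ∞) := by
  rw [gfun_succ] at h
  split_ifs at h with hc
  · have : mexF (Γ x) (Gfun Γ n) = m := Nat.cast_inj.mp h
    rw [this] at hc
    exact ⟨this, hc⟩
  · exact absurd h.symm (ne_of_beq_false rfl)

lemma gfun_succ_intro {n : ℕ} {x : V} {m : ℕ}
    (hmex : mexF (Γ x) (Gfun Γ n) = m)
    (hc : ∀ y ∈ Γ x, Gfun Γ n y ≤ (m : ℕ∞) ∨ ∃ z ∈ Γ y, Gfun Γ n z = (m : ℕ∞)) :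
    Gfun Γ (n + 1) x = (m : ℕ∞) := by
  rw [gfun_succ, hmex, if_pos hc]

lemma gfun_persist {n : ℕ} {x : V} {m : ℕ} (h : Gfun Γ n x = (m : ℕ∞)) :
    Gfun Γ (n + 1) x = (m : ℕ∞) := by
  induction n generalizing x m with
  | zero =>
    simp only [Gfun] at h
    split_ifs at h with he
    · have hm : m = 0 := by exact_mod_cast h.symm
      subst hm
      refine gfun_succ_intro Γ ?_ ?_
      · exact mexF_eq (by simp [he]) (by omega)
      · simp [he]
    · exact absurd h.symm (ne_of_beq_false rfl)
  | succ n ih =>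
    obtain ⟨hmex, hc⟩ := gfun_succ_elim Γ h
    refine gfun_succ_intro Γ ?_ ?_
    · refine mexF_eq ?_ ?_
      · intro y hy hgy
        -- Gfun Γ (n+1) y = m; derive contradiction
        obtain ⟨hmexy, hcy⟩ := gfun_succ_elim Γ hgy
        have hy' : Gfun Γ n y ≠ (m : ℕ∞) := by
          rw [← hmex]; exact mexF_not_attained _ _ y hy
        rcases hc y hy with hle | ⟨z, hz, hgz⟩
        · obtain ⟨v, hv, hvm⟩ := ENat.le_natCast_iff.mp hle
          have hvm' : (v : ℕ∞) = (m : ℕ∞) := by rw [← ih hv, hgy]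
          exact hy' (by rw [hv]; exact hvm')
        · have : Gfun Γ n z ≠ (m : ℕ∞) := by
            rw [← hmexy]; exact mexF_not_attained _ _ z hz
          exact this hgz
      · intro j hj
        rw [← hmex] at hj
        obtain ⟨y, hy, hgy⟩ := mexF_attained hj
        exact ⟨y, hy, ih hgy⟩
    · intro y hy
      rcases hc y hy with hle | ⟨z, hz, hgz⟩
      · obtain ⟨v, hv, hvm⟩ := ENat.le_natCast_iff.mp hle
        left; rw [ih hv]; exact_mod_cast hvm
      · right; exact ⟨z, hz, ih hgz⟩

lemma gfun_persist_ge {n k : ℕ} (hnk : n ≤ k) {x : V} {m : ℕ}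
    (h : Gfun Γ n x = (m : ℕ∞)) : Gfun Γ k x = (m : ℕ∞) := by
  induction k with
  | zero =>
    have hn0 : n = 0 := by omega
    subst hn0
    exact h
  | succ k ih =>
    rcases Nat.lt_or_ge n (k + 1) with h' | h'
    · exact gfun_persist Γ (ih (by omega))
    · have hnk1 : n = k + 1 := by omega
      subst hnk1
      exact h

lemma hasGVal_of_stage {n : ℕ} {x : V} {m : ℕ} (h : Gfun Γ n x = (m : ℕ∞)) :
    HasGVal Γ x m :=
  ⟨n, fun k hk => gfun_persist_ge Γ hk h⟩

lemma gval_unique {n n' : ℕ} {x : V} {m m' : ℕ}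
    (h : Gfun Γ n x = (m : ℕ∞)) (h' : Gfun Γ n' x = (m' : ℕ∞)) : m = m' := by
  have h1 := gfun_persist_ge Γ (le_max_left n n') h
  have h2 := gfun_persist_ge Γ (le_max_right n n') h'
  rw [h1] at h2
  exact_mod_cast h2

lemma posP_disjoint : ∀ (a : ℕ) {b : ℕ} {x y : V},
    x ∈ PosP Γ a → y ∈ Γ x → y ∈ PosP Γ b → False := by
  intro a
  induction a with
  | zero =>
    intro b x y hx hy _
    rw [PosP] at hx
    simp only [Set.mem_setOf_eq] at hx
    rw [hx] at hy
    exact absurd hy (Finset.notMem_empty y)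
  | succ a ih =>
    intro b x y hx hy hyb
    obtain ⟨z, hz, hzP⟩ := hx y hy
    match b with
    | 0 =>
      rw [PosP] at hyb
      simp only [Set.mem_setOf_eq] at hyb
      rw [hyb] at hz
      exact absurd hz (Finset.notMem_empty z)
    | b + 1 =>
      obtain ⟨w, hw, hwP⟩ := hyb z hz
      exact ih hzP hw hwP

lemma posP_of_gfun_zero : ∀ (n : ℕ) {x : V}, Gfun Γ n x = (0 : ℕ∞) → x ∈ PosP Γ n := by
  intro n
  induction n with
  | zero =>
    intro x h
    simp only [Gfun] at h
    split_ifs at h with he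
    · exact he
    · exact absurd h.symm (ne_of_beq_false rfl)
  | succ n ih =>
    intro x h
    obtain ⟨hmex, hc⟩ := gfun_succ_elim Γ h
    intro y hy
    rcases hc y hy with hle | ⟨z, hz, hgz⟩
    · exfalso
      have h0 : Gfun Γ n y = (0 : ℕ∞) := le_antisymm (by exact_mod_cast hle) zero_le
      have hna := mexF_not_attained (Γ x) (Gfun Γ n) y hy
      rw [hmex] at hna
      exact hna (by exact_mod_cast h0)
    · exact ⟨z, hz, ih hgz⟩

/-- Uniform bound over a finset. -/
lemma finset_uniform_bound {α : Type*} (s : Finset α) (P : α → ℕ → Prop)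
    (h : ∀ a ∈ s, ∃ N, ∀ n ≥ N, P a n) :
    ∃ N, ∀ a ∈ s, ∀ n ≥ N, P a n := by
  classical
  choose! f hf using h
  exact ⟨s.sup f, fun a ha n hn => hf a ha n (le_trans (Finset.le_sup ha) hn)⟩

lemma pPos_hasGVal_zero {x : V} (hx : x ∈ PPos Γ) : HasGVal Γ x 0 := by
  obtain ⟨n, hn⟩ : ∃ n, x ∈ PosP Γ n := by
    simpa [PPos, Set.mem_iUnion] using hx
  clear hx
  induction n using Nat.strong_induction_on generalizing x with
  | _ n ih =>
    match n with
    | 0 =>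
      have he : Γ x = ∅ := hn
      refine hasGVal_of_stage Γ (n := 0) ?_
      simp only [Gfun]
      rw [if_pos he]
      rfl
    | n + 1 =>
      have hstep : ∀ y ∈ Γ x, ∃ N, ∀ k ≥ N,
          ∃ z ∈ Γ y, z ∈ PosP Γ n ∧ Gfun Γ k z = (0 : ℕ∞) := by
        intro y hy
        obtain ⟨z, hz, hzP⟩ := hn y hy
        obtain ⟨N, hN⟩ := ih n (by omega) hzP
        exact ⟨N, fun k hk => ⟨z, hz, hzP, hN k hk⟩⟩
      obtain ⟨N, hN⟩ := finset_uniform_bound (Γ x) _ hstep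
      refine hasGVal_of_stage Γ (n := N + 1) ?_
      refine gfun_succ_intro Γ (m := 0) ?_ ?_
      · refine mexF_eq ?_ (by omega)
        intro y hy hgy
        obtain ⟨z, hz, hzP, _⟩ := hN y hy N le_rfl
        exact posP_disjoint Γ N (posP_of_gfun_zero Γ N hgy) hz hzP
      · intro y hy
        obtain ⟨z, hz, _, hz0⟩ := hN y hy N le_rfl
        exact Or.inr ⟨z, hz, hz0⟩

lemma not_pPos_of_gfun {n : ℕ} {x : V} {m : ℕ} (hm : 1 ≤ m)
    (h : Gfun Γ n x = (m : ℕ∞)) : x ∉ PPos Γ := by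
  intro hx
  obtain ⟨N, hN⟩ := pPos_hasGVal_zero Γ hx
  have := gval_unique Γ h (hN N le_rfl)
  omega

lemma stmt9_aux {V : Type*} (Γ : V → Finset V) :
    ∀ (n : ℕ) (x : V) (hx : x ∉ PPos Γ) (m : ℕ), Gfun Γ n x = (m : ℕ∞) →
      1 ≤ m ∧ HasGVal (reducedGraph Γ) ⟨x, hx⟩ (m - 1) := by
  intro n
  induction n using Nat.strong_induction_on with
  | _ n ih =>
    match n with
    | 0 =>
      intro x hx m h
      exfalso
      simp only [Gfun] at h
      split_ifs at h with he
      · exact hx (Set.mem_iUnion.mpr ⟨0, he⟩)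
      · exact absurd h.symm (ne_of_beq_false rfl)
    | n + 1 =>
      intro x hx m h
      obtain ⟨hmex, hc⟩ := gfun_succ_elim Γ h
      have hm1 : 1 ≤ m := by
        rcases Nat.eq_zero_or_pos m with h0 | h1
        · subst h0
          exact absurd (Set.mem_iUnion.mpr ⟨n + 1, posP_of_gfun_zero Γ (n + 1) (by exact_mod_cast h)⟩) hx
        · exact h1
      refine ⟨hm1, ?_⟩
      -- uniform attainment of values 0, …, m-2 in the reduced graph
      have hA : ∃ N, ∀ j ∈ Finset.range m, ∀ k ≥ N,
          (j = 0 ∨ ∃ y' ∈ reducedGraph Γ ⟨x, hx⟩, Gfun (reducedGraph Γ) k y' = ((j - 1 : ℕ) : ℕ∞)) := by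
        refine finset_uniform_bound (Finset.range m) _ ?_
        intro j hj
        rcases Nat.eq_zero_or_pos j with h0 | h1
        · exact ⟨0, fun k _ => Or.inl h0⟩
        · have hjm : j < m := Finset.mem_range.mp hj
          obtain ⟨y, hy, hgy⟩ := mexF_attained (g := Gfun Γ n) (hmex ▸ hjm)
          have hyP : y ∉ PPos Γ := not_pPos_of_gfun Γ h1 hgy
          obtain ⟨N, hN⟩ := (ih n (by omega) y hyP j hgy).2
          refine ⟨N, fun k hk => Or.inr ⟨⟨y, hyP⟩, ?_, hN k hk⟩⟩
          exact Finset.mem_subtype.mpr hy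
      obtain ⟨N₁, hN₁⟩ := hA
      -- uniform facts about every option in the reduced graph
      have hB : ∃ N, ∀ y' ∈ reducedGraph Γ ⟨x, hx⟩, ∀ k ≥ N,
          (Gfun (reducedGraph Γ) k y' ≠ ((m - 1 : ℕ) : ℕ∞) ∧
            (Gfun (reducedGraph Γ) k y' ≤ ((m - 1 : ℕ) : ℕ∞) ∨
              ∃ z' ∈ reducedGraph Γ y', Gfun (reducedGraph Γ) k z' = ((m - 1 : ℕ) : ℕ∞))) := by
        refine finset_uniform_bound _ _ ?_
        intro y' hy'
        have hy1 : y'.1 ∈ Γ x := Finset.mem_subtype.mp hy'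
        rcases hc y'.1 hy1 with hle | ⟨z, hz, hgz⟩
        · obtain ⟨v, hv, hvm⟩ := ENat.le_natCast_iff.mp hle
          have hvne : v ≠ m := by
            intro hvm'
            subst hvm'
            have := mexF_not_attained (Γ x) (Gfun Γ n) y'.1 hy1
            rw [hmex] at this
            exact this hv
          have hv1 : 1 ≤ v := by
            rcases Nat.eq_zero_or_pos v with h0 | h1
            · subst h0
              exact absurd (Set.mem_iUnion.mpr ⟨n, posP_of_gfun_zero Γ n (by exact_mod_cast hv)⟩) y'.2
            · exact h1
          obtain ⟨N, hN⟩ := (ih n (by omega) y'.1 y'.2 v hv).2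
          refine ⟨N, fun k hk => ?_⟩
          have hval := hN k hk
          constructor
          · rw [hval]
            intro hcast
            have : v - 1 = m - 1 := Nat.cast_inj.mp hcast
            omega
          · left
            rw [hval]
            exact Nat.cast_le.mpr (by omega)
        · have hzP : z ∉ PPos Γ := not_pPos_of_gfun Γ hm1 hgz
          obtain ⟨N, hN⟩ := (ih n (by omega) z hzP m hgz).2
          have hz' : (⟨z, hzP⟩ : {x : V // x ∉ PPos Γ}) ∈ reducedGraph Γ y' :=
            Finset.mem_subtype.mpr hz
          refine ⟨N + 1, fun k hk => ?_⟩
          constructor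
          · intro hky
            obtain ⟨K, rfl⟩ : ∃ K, k = K + 1 := ⟨k - 1, by omega⟩
            obtain ⟨hmexy, _⟩ := gfun_succ_elim (reducedGraph Γ) hky
            have := mexF_not_attained (reducedGraph Γ y') (Gfun (reducedGraph Γ) K) _ hz'
            rw [hmexy] at this
            exact this (hN K (by omega))
          · exact Or.inr ⟨⟨z, hzP⟩, hz', hN k (by omega)⟩
      obtain ⟨N₀, hN₀⟩ := hB
      refine ⟨max N₀ N₁ + 1, fun k hk => ?_⟩
      obtain ⟨K, rfl⟩ : ∃ K, k = K + 1 := ⟨k - 1, by omega⟩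
      have hKN₀ : K ≥ N₀ := by omega
      have hKN₁ : K ≥ N₁ := by omega
      refine gfun_succ_intro (reducedGraph Γ) ?_ ?_
      · refine mexF_eq ?_ ?_
        · intro y' hy'
          exact (hN₀ y' hy' K hKN₀).1
        · intro j hj
          have := hN₁ (j + 1) (Finset.mem_range.mpr (by omega)) K hKN₁
          rcases this with h0 | ⟨y', hy', hval⟩
          · omega
          · refine ⟨y', hy', ?_⟩
            simpa using hval
      · intro y' hy'
        exact (hN₀ y' hy' K hKN₀).2

end Aux

/-- if `x` is a position of `R(V)` of finite rank in `V` with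
`𝒢_V(x) = m`, then `x` has finite rank in `R(V)` with
`𝒢_{R(V)}(x) = 𝒢_V(x) − 1`. -/
theorem stmt9 {V : Type*} (Γ : V → Finset V) (x : V) (hx : x ∉ PPos Γ)
    (m : ℕ) (h : HasGVal Γ x m) :
    HasGVal (reducedGraph Γ) ⟨x, hx⟩ (m - 1) := by
  obtain ⟨n₀, hn₀⟩ := h
  exact (stmt9_aux Γ n₀ x hx m (hn₀ n₀ le_rfl)).2
end

section
/- Let V be a locally finite game graph, let f be a mex labelling of V, and let x ∈ V be a position of finite rank with 𝒢(x) = m. Then f(x) = m. -/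
open scoped Classical

universe u

lemma sInf_eq_of_aux {S : Set ℕ} {m : ℕ} (h1 : m ∈ S) (h2 : ∀ j < m, j ∉ S) :
    sInf S = m :=
  le_antisymm (Nat.sInf_le h1)
    (le_of_not_gt fun h => h2 _ h (Nat.sInf_mem ⟨m, h1⟩))

lemma natSet_nonempty {V : Type*} (s : Finset V) (g : V → ℕ∞) :
    {n : ℕ | ∀ y ∈ s, g y ≠ (n : ℕ∞)}.Nonempty := by
  refine ⟨(s.sup fun y => (g y).toNat) + 1, fun y hy hEq => ?_⟩
  have h1 : (g y).toNat ≤ s.sup fun y => (g y).toNat := Finset.le_sup (f := fun y => (g y).toNat) hy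
  rw [hEq, ENat.toNat_coe] at h1
  omega

lemma mexF_notMem {V : Type*} (s : Finset V) (g : V → ℕ∞) :
    ∀ y ∈ s, g y ≠ (mexF s g : ℕ∞) :=
  Nat.sInf_mem (natSet_nonempty s g)

lemma mexF_lt {V : Type*} (s : Finset V) (g : V → ℕ∞) {j : ℕ} (hj : j < mexF s g) :
    ∃ y ∈ s, g y = (j : ℕ∞) := by
  by_contra h
  push_neg at h
  exact absurd (Nat.sInf_le (show j ∈ {n : ℕ | ∀ y ∈ s, g y ≠ (n : ℕ∞)} from h))
    (not_le.2 hj)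

lemma Gfun_succ_eq {V : Type*} (Γ : V → Finset V) (n : ℕ) (x : V) :
    Gfun Γ (n+1) x =
      if ∀ y ∈ Γ x, Gfun Γ n y ≤ (mexF (Γ x) (Gfun Γ n) : ℕ∞) ∨
         ∃ z ∈ Γ y, Gfun Γ n z = (mexF (Γ x) (Gfun Γ n) : ℕ∞)
      then (mexF (Γ x) (Gfun Γ n) : ℕ∞) else ⊤ := rfl

lemma mexLabelling_ne {V : Type*} {Γ : V → Finset V} {f : V → ℕ}
    (hf : MexLabelling Γ f) {y z : V} (hz : z ∈ Γ y) : f z ≠ f y := by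
  have hy := hf y
  have hne : {n : ℕ | ∀ w ∈ Γ y, f w ≠ n}.Nonempty := by
    refine ⟨(Γ y).sup f + 1, fun w hw => ?_⟩
    have := Finset.le_sup (f := f) hw
    omega
  have hmem := Nat.sInf_mem hne
  rw [← hy] at hmem
  exact hmem z hz

lemma key_lemma {V : Type*} (Γ : V → Finset V) (f : V → ℕ) (hf : MexLabelling Γ f) :
    ∀ n : ℕ, ∀ x : V, ∀ m : ℕ, Gfun Γ n x = (m : ℕ∞) → f x = m := by
  intro n
  induction n with
  | zero =>
    intro x m hx
    by_cases hΓ : Γ x = ∅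
    · have h0 : Gfun Γ 0 x = 0 := by simp [Gfun, hΓ]
      rw [h0] at hx
      have hm0 : m = 0 := by exact_mod_cast hx.symm
      subst hm0
      rw [hf x]
      refine sInf_eq_of_aux ?_ (by omega)
      intro y hy
      simp [hΓ] at hy
    · have h0 : Gfun Γ 0 x = ⊤ := by simp [Gfun, hΓ]
      rw [h0] at hx
      exact absurd hx.symm (by simp)
  | succ n ih =>
    intro x m hx
    rw [Gfun_succ_eq] at hx
    split at hx
    case isFalse => exact absurd hx.symm (by simp)
    case isTrue hcond =>
      have hmex : mexF (Γ x) (Gfun Γ n) = m := by exact_mod_cast hx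
      rw [hmex] at hcond
      rw [hf x]
      refine sInf_eq_of_aux ?_ ?_
      · -- ∀ y ∈ Γ x, f y ≠ m
        intro y hy
        rcases hcond y hy with hle | ⟨z, hz, hzv⟩
        · have hne : Gfun Γ n y ≠ ⊤ := ne_top_of_le_ne_top (by simp) hle
          obtain ⟨j, hj⟩ := WithTop.ne_top_iff_exists.mp hne
          have hjm : j ≠ m := by
            intro hjm
            exact mexF_notMem (Γ x) (Gfun Γ n) y hy (by rw [← hj, hjm, hmex]; norm_cast)
          have := ih y j hj.symm
          omega
        · have hz' : f z = m := ih z m hzv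
          have := mexLabelling_ne hf hz
          omega
      · -- ∀ j < m, j ∉ S
        intro j hj hjS
        obtain ⟨y, hy, hyv⟩ := mexF_lt (Γ x) (Gfun Γ n) (hmex ▸ hj)
        exact hjS y hy (ih y j hyv)

/-- if `f` is a mex labelling of `V` and `x` has finite rank with
`𝒢(x) = m`, then `f x = m`. -/
theorem stmt13 {V : Type*} (Γ : V → Finset V) (f : V → ℕ) (hf : MexLabelling Γ f)
    (x : V) (m : ℕ) (h : HasGVal Γ x m) :
    f x = m := by
  obtain ⟨n₀, hn₀⟩ := h
  exact key_lemma Γ f hf n₀ x m (hn₀ n₀ le_rfl)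
end
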